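/- Let X be a separable real Banach space with property (M*) and let ε ∈ (0,2). If x₀* ∈ s_ε B_{X*} and y₀* ∈ X* satisfies ‖y₀*‖ ≤ ‖x₀*‖, then y₀* ∈ s_ε B_{X*}. -/

import Mathlib

open Filter Topology Metric

/-- The ε-Szlenk derivation of the closed dual unit ball of `X`. -/
def szlenkDeriv (X : Type*) [NormedAddCommGroup X] [NormedSpace ℝ X] (ε : ℝ) :
    Set (StrongDual ℝ X) :=
  {x : StrongDual ℝ X | ‖x‖ ≤ 1 ∧
    ∀ V : Set (StrongDual ℝ X),
      IsOpen ((StrongDual.toWeakDual '' V : Set (WeakDual ℝ X))) → x ∈ V →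
        ε < Metric.diam (Metric.closedBall (0 : StrongDual ℝ X) 1 ∩ V)}

/-- A sequence in the dual is weak*-null if it tends to `0` in the weak* topology. -/
def WeakStarNull {X : Type*} [NormedAddCommGroup X] [NormedSpace ℝ X]
    (u : ℕ → StrongDual ℝ X) : Prop :=
  Filter.Tendsto (fun n => StrongDual.toWeakDual (u n)) Filter.atTop
    (nhds (0 : WeakDual ℝ X))

/-- Kalton's property (M*). -/
def PropMStar (X : Type*) [NormedAddCommGroup X] [NormedSpace ℝ X] : Prop :=
  ∀ x y : StrongDual ℝ X, ‖x‖ = ‖y‖ →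
    ∀ u : ℕ → StrongDual ℝ X, WeakStarNull u →
      Filter.limsup (fun n => ‖x + u n‖) Filter.atTop
        = Filter.limsup (fun n => ‖y + u n‖) Filter.atTop


set_option maxHeartbeats 1600000 in
theorem mem_szlenkDeriv_of_norm_le (X : Type*) [NormedAddCommGroup X]
    [NormedSpace ℝ X] [CompleteSpace X] [TopologicalSpace.SeparableSpace X]
    (hM : PropMStar X) (ε : ℝ) (hε : ε ∈ Set.Ioo (0 : ℝ) 2)
    (x₀ y₀ : StrongDual ℝ X) (hx₀ : x₀ ∈ szlenkDeriv X ε)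
    (hy₀ : ‖y₀‖ ≤ ‖x₀‖) :
    y₀ ∈ szlenkDeriv X ε := by
  obtain ⟨hε0, hε2⟩ := hε
  by_cases hx0 : x₀ = 0
  · have hy0 : y₀ = 0 := by
      have h : ‖y₀‖ ≤ 0 := by simpa [hx0] using hy₀
      simpa using le_antisymm h (norm_nonneg _)
    rw [hy0, ← hx0]
    exact hx₀
  have hnx : 0 < ‖x₀‖ := norm_pos_iff.mpr hx0
  have hx1 : ‖x₀‖ ≤ 1 := hx₀.1
  have : Nonempty X := ⟨0⟩
  set d : ℕ → X := TopologicalSpace.denseSeq X with hd_def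
  have hd : DenseRange d := TopologicalSpace.denseRange_denseSeq X
  -- Step 1: extract pairs of far-apart points weak*-close to x₀
  have key : ∀ n : ℕ, ∃ p q : StrongDual ℝ X, ‖p‖ ≤ 1 ∧ ‖q‖ ≤ 1 ∧
      (∀ i ≤ n, |(p - x₀) (d i)| < 1 / (n + 1)) ∧
      (∀ i ≤ n, |(q - x₀) (d i)| < 1 / (n + 1)) ∧ ε < ‖p - q‖ := by
    intro n
    have hn1 : (0:ℝ) < 1 / (n + 1) := by positivity
    set V : Set (StrongDual ℝ X) :=
      {z | ∀ i ≤ n, |(z - x₀) (d i)| < 1 / (n + 1)} with hV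
    have himg : (StrongDual.toWeakDual '' V : Set (WeakDual ℝ X)) =
        ⋂ i ∈ Finset.Iic n,
          (fun z : WeakDual ℝ X => z (d i)) ⁻¹' Metric.ball (x₀ (d i)) (1 / (n + 1)) := by
      ext z
      simp only [Set.mem_iInter, Set.mem_preimage, Metric.mem_ball, Real.dist_eq,
        Finset.mem_Iic, Set.mem_image]
      constructor
      · rintro ⟨u, hu, rfl⟩ i hi
        have h := hu i hi
        simp only [ContinuousLinearMap.sub_apply] at h
        exact h
      · intro hz
        refine ⟨z, fun i hi => ?_, rfl⟩
        have h := hz i hi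
        show |z (d i) - x₀ (d i)| < 1 / (n + 1)
        exact h
    have hVopen : IsOpen (StrongDual.toWeakDual '' V : Set (WeakDual ℝ X)) := by
      rw [himg]
      exact isOpen_biInter_finset fun i _ =>
        Metric.isOpen_ball.preimage (WeakDual.eval_continuous (d i))
    have hx₀V : x₀ ∈ V := fun i _ => by simpa using hn1
    have hdiam := hx₀.2 V hVopen hx₀V
    have hpair : ∃ p ∈ Metric.closedBall (0 : StrongDual ℝ X) 1 ∩ V,
        ∃ q ∈ Metric.closedBall (0 : StrongDual ℝ X) 1 ∩ V, ε < dist p q := by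
      by_contra hcon
      push_neg at hcon
      exact absurd hdiam (not_lt.mpr (Metric.diam_le_of_forall_dist_le hε0.le hcon))
    obtain ⟨p, ⟨hp1, hp2⟩, q, ⟨hq1, hq2⟩, hpq⟩ := hpair
    exact ⟨p, q, mem_closedBall_zero_iff.mp hp1, mem_closedBall_zero_iff.mp hq1,
      hp2, hq2, by rwa [dist_eq_norm] at hpq⟩
  choose a b ha1 hb1 ha2 hb2 hab using key
  -- Step 2: the weak*-null sequence w
  set w : ℕ → StrongDual ℝ X :=
    fun n => if ε / 2 < ‖a n - x₀‖ then a n - x₀ else b n - x₀ with hw_def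
  have hxw_mem : ∀ n, ‖x₀ + w n‖ ≤ 1 := by
    intro n
    by_cases h : ε / 2 < ‖a n - x₀‖
    · have : x₀ + w n = a n := by simp only [hw_def, if_pos h]; abel
      rw [this]; exact ha1 n
    · have : x₀ + w n = b n := by simp only [hw_def, if_neg h]; abel
      rw [this]; exact hb1 n
  have hw_gt : ∀ n, ε / 2 < ‖w n‖ := by
    intro n
    by_cases h : ε / 2 < ‖a n - x₀‖
    · simpa [hw_def, if_pos h] using h
    · push_neg at h
      have h1 : ε < ‖a n - b n‖ := hab n
      have h2 : ‖a n - b n‖ ≤ ‖a n - x₀‖ + ‖b n - x₀‖ := by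
        have h3 := norm_sub_le (a n - x₀) (b n - x₀)
        rw [sub_sub_sub_cancel_right] at h3
        exact h3
      have h4 : ε / 2 < ‖b n - x₀‖ := by linarith
      simpa [hw_def, if_neg (not_lt.mpr h)] using h4
  have hw_le : ∀ n, ‖w n‖ ≤ 2 := by
    intro n
    have h := norm_sub_le (x₀ + w n) x₀
    have h2 : x₀ + w n - x₀ = w n := by abel
    rw [h2] at h
    linarith [hxw_mem n, hx1]
  have hw_eval : ∀ n, ∀ i ≤ n, |w n (d i)| < 1 / (n + 1) := by
    intro n i hi
    by_cases h : ε / 2 < ‖a n - x₀‖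
    · simpa [hw_def, if_pos h] using ha2 n i hi
    · simpa [hw_def, if_neg h] using hb2 n i hi
  have hwpt : ∀ x : X, Tendsto (fun n => w n x) atTop (nhds 0) := by
    intro x
    rw [Metric.tendsto_atTop]
    intro γ hγ
    obtain ⟨i, hi⟩ := hd.exists_dist_lt x (show (0:ℝ) < γ / 8 by linarith)
    obtain ⟨M, hM'⟩ := exists_nat_gt (2 / γ)
    refine ⟨max i M, fun n hn => ?_⟩
    have hni : i ≤ n := le_trans (le_max_left _ _) hn
    have hnM : (M:ℝ) ≤ n := by exact_mod_cast le_trans (le_max_right _ _) hn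
    have hsmall : 1 / ((n:ℝ) + 1) < γ / 2 := by
      have h2γ : 2 / γ < (n:ℝ) + 1 := by linarith
      rw [div_lt_iff₀ hγ] at h2γ
      rw [div_lt_div_iff₀ (by positivity) (by norm_num : (0:ℝ) < 2)]
      nlinarith
    have hdx : ‖x - d i‖ < γ / 8 := by rwa [dist_eq_norm] at hi
    have h3 : w n x = w n (x - d i) + w n (d i) := by rw [map_sub]; ring
    have h4 : |w n (x - d i)| ≤ ‖w n‖ * ‖x - d i‖ := by
      simpa [Real.norm_eq_abs] using (w n).le_opNorm (x - d i)
    have h5 : ‖w n‖ * ‖x - d i‖ ≤ 2 * (γ / 8) :=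
      mul_le_mul (hw_le n) hdx.le (norm_nonneg _) (by norm_num)
    have h6 : |w n (d i)| < γ / 2 := lt_trans (hw_eval n i hni) hsmall
    rw [dist_zero_right, Real.norm_eq_abs, h3]
    calc |w n (x - d i) + w n (d i)| ≤ |w n (x - d i)| + |w n (d i)| := abs_add_le _ _
      _ < 2 * (γ / 8) + γ / 2 := by linarith
      _ < γ := by linarith
  have hwnull : WeakStarNull w := by
    show Tendsto (fun n => StrongDual.toWeakDual (w n)) atTop (nhds (0 : WeakDual ℝ X))
    refine tendsto_iff_forall_eval_tendsto_topDualPairing.mpr fun x => ?_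
    show Tendsto (fun n => w n x) atTop (nhds 0)
    exact hwpt x
  -- Step 3: limsup bounds via property (M*)
  have hA : limsup (fun n => ‖x₀ + w n‖) atTop ≤ 1 :=
    limsup_le_of_le (isCoboundedUnder_le_of_le atTop fun n => norm_nonneg _)
      (Eventually.of_forall hxw_mem)
  have hBeq : limsup (fun n => ‖x₀ - w n‖) atTop = limsup (fun n => ‖x₀ + w n‖) atTop := by
    have h := hM (-x₀) x₀ (by simp) w hwnull
    have heq : (fun n => ‖-x₀ + w n‖) = fun n => ‖x₀ - w n‖ := by
      funext n; rw [show -x₀ + w n = -(x₀ - w n) by abel, norm_neg]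
    rw [← heq]; exact h
  have hB : limsup (fun n => ‖x₀ - w n‖) atTop ≤ 1 := by rw [hBeq]; exact hA
  set t : ℝ := ‖y₀‖ / ‖x₀‖ with ht_def
  have ht0 : 0 ≤ t := by positivity
  have ht1 : t ≤ 1 := (div_le_one hnx).mpr hy₀
  have htnorm : ‖y₀‖ = ‖t • x₀‖ := by
    rw [norm_smul, Real.norm_eq_abs, abs_of_nonneg ht0, ht_def,
      div_mul_cancel₀ _ (ne_of_gt hnx)]
  have hbddB : IsBoundedUnder (· ≤ ·) atTop (fun n => ‖x₀ - w n‖) :=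
    isBoundedUnder_of ⟨‖x₀‖ + 2, fun n => (norm_sub_le _ _).trans (by linarith [hw_le n])⟩
  have hY : limsup (fun n => ‖y₀ + w n‖) atTop ≤ 1 := by
    rw [hM y₀ (t • x₀) htnorm w hwnull]
    refine le_of_forall_pos_le_add fun δ hδ => ?_
    have hev : ∀ᶠ n in atTop, ‖x₀ - w n‖ < 1 + δ :=
      eventually_lt_of_limsup_lt (lt_of_le_of_lt hB (by linarith)) hbddB
    refine limsup_le_of_le (isCoboundedUnder_le_of_le atTop fun n => norm_nonneg _) ?_
    filter_upwards [hev] with n hn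
    have hid : t • x₀ + w n = ((1 + t) / 2) • (x₀ + w n) - ((1 - t) / 2) • (x₀ - w n) := by
      module
    rw [hid]
    have h1 := norm_sub_le (((1 + t) / 2) • (x₀ + w n)) (((1 - t) / 2) • (x₀ - w n))
    rw [norm_smul, norm_smul, Real.norm_eq_abs, Real.norm_eq_abs,
      abs_of_nonneg (by linarith : (0:ℝ) ≤ (1 + t) / 2),
      abs_of_nonneg (by linarith : (0:ℝ) ≤ (1 - t) / 2)] at h1
    have h2 : ‖x₀ + w n‖ ≤ 1 := hxw_mem n
    nlinarith [norm_nonneg (x₀ - w n), norm_nonneg (x₀ + w n),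
      mul_le_mul_of_nonneg_left h2 (show (0:ℝ) ≤ (1 + t) / 2 by linarith),
      mul_le_mul_of_nonneg_left hn.le (show (0:ℝ) ≤ (1 - t) / 2 by linarith),
      mul_nonneg hδ.le ht0]
  have hYm : limsup (fun n => ‖y₀ - w n‖) atTop ≤ 1 := by
    have h := hM (-y₀) y₀ (by simp) w hwnull
    have heq : (fun n => ‖-y₀ + w n‖) = fun n => ‖y₀ - w n‖ := by
      funext n; rw [show -y₀ + w n = -(y₀ - w n) by abel, norm_neg]
    rw [← heq, h]
    exact hY
  -- Step 4: verify the Szlenk condition for y₀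
  refine ⟨hy₀.trans hx1, fun V hVopen hyV => ?_⟩
  set δ' : ℝ := (2 - ε) / 4 with hδ'_def
  have hδ'0 : 0 < δ' := by rw [hδ'_def]; linarith
  have hδ'1 : δ' < 1 := by rw [hδ'_def]; linarith
  have hcont : Continuous fun α : ℝ => StrongDual.toWeakDual (α • y₀) := by
    have heq : (fun α : ℝ => StrongDual.toWeakDual (α • y₀))
        = fun α : ℝ => α • StrongDual.toWeakDual y₀ := by
      funext α; exact map_smul StrongDual.toWeakDual α y₀
    rw [heq]
    exact continuous_id.smul continuous_const
  have hmem1 : StrongDual.toWeakDual y₀ ∈ StrongDual.toWeakDual '' V :=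
    ⟨y₀, hyV, rfl⟩
  have htd : Tendsto (fun α : ℝ => StrongDual.toWeakDual (α • y₀)) (nhds 1)
      (nhds (StrongDual.toWeakDual y₀)) := by
    simpa using hcont.tendsto 1
  have hev_α : ∀ᶠ α : ℝ in nhds 1,
      StrongDual.toWeakDual (α • y₀) ∈ StrongDual.toWeakDual '' V :=
    htd.eventually (hVopen.eventually_mem hmem1)
  obtain ⟨r, hr0, hr⟩ := Metric.eventually_nhds_iff.mp hev_α
  set α : ℝ := 1 - min r 1 / 2 with hα_def
  have hmin0 : 0 < min r 1 := lt_min hr0 one_pos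
  have hmin1 : min r 1 ≤ 1 := min_le_right _ _
  have hα0 : 0 < α := by rw [hα_def]; linarith
  have hα1 : α < 1 := by rw [hα_def]; linarith
  have hαV : StrongDual.toWeakDual (α • y₀) ∈ StrongDual.toWeakDual '' V := by
    apply hr
    rw [Real.dist_eq, hα_def]
    have h1 : (1 - min r 1 / 2) - 1 = -(min r 1 / 2) := by ring
    rw [h1, abs_neg, abs_of_nonneg (by linarith)]
    have := min_le_left r 1
    linarith
  set δ : ℝ := (1 - α) * δ' / α with hδ_def
  have hδ0 : 0 < δ := div_pos (mul_pos (by linarith) hδ'0) hα0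
  have hbddY : IsBoundedUnder (· ≤ ·) atTop (fun n => ‖y₀ + w n‖) :=
    isBoundedUnder_of ⟨‖y₀‖ + 2, fun n => (norm_add_le _ _).trans (by linarith [hw_le n])⟩
  have hbddY' : IsBoundedUnder (· ≤ ·) atTop (fun n => ‖y₀ - w n‖) :=
    isBoundedUnder_of ⟨‖y₀‖ + 2, fun n => (norm_sub_le _ _).trans (by linarith [hw_le n])⟩
  have hev1 : ∀ᶠ n in atTop, ‖y₀ + w n‖ < 1 + δ :=
    eventually_lt_of_limsup_lt (lt_of_le_of_lt hY (by linarith)) hbddY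
  have hev2 : ∀ᶠ n in atTop, ‖y₀ - w n‖ < 1 + δ :=
    eventually_lt_of_limsup_lt (lt_of_le_of_lt hYm (by linarith)) hbddY'
  have hwn0 : ∀ n, (0:ℝ) < ‖w n‖ := fun n => lt_trans (by linarith) (hw_gt n)
  set c : ℕ → ℝ := fun n => α + (1 - α) * (1 - δ') / ‖w n‖ with hc_def
  have hc_nonneg : ∀ n, 0 ≤ c n := by
    intro n
    have h1 : (0:ℝ) ≤ (1 - α) * (1 - δ') / ‖w n‖ :=
      div_nonneg (mul_nonneg (by linarith) (by linarith)) (norm_nonneg _)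
    simp only [hc_def]
    linarith
  set C : ℝ := α + (1 - α) * (1 - δ') * 2 / ε with hC_def
  have hc_le : ∀ n, c n ≤ C := by
    intro n
    have h1 : (0:ℝ) ≤ (1 - α) * (1 - δ') := mul_nonneg (by linarith) (by linarith)
    have h2 : (1 - α) * (1 - δ') / ‖w n‖ ≤ (1 - α) * (1 - δ') * 2 / ε := by
      rw [div_le_div_iff₀ (hwn0 n) hε0]
      nlinarith [mul_le_mul_of_nonneg_left (hw_gt n).le (mul_nonneg h1 (by norm_num : (0:ℝ) ≤ 2))]
    simp only [hc_def, hC_def]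
    linarith
  -- tendsto of the points p n and q n
  have hmul0 : ∀ x : X, Tendsto (fun n => c n * w n x) atTop (nhds 0) := by
    intro x
    have habs : Tendsto (fun n => |w n x|) atTop (nhds 0) := by
      simpa using (hwpt x).abs
    have hsq : Tendsto (fun n => C * |w n x|) atTop (nhds 0) := by
      simpa using habs.const_mul C
    refine squeeze_zero_norm (fun n => ?_) hsq
    rw [Real.norm_eq_abs, abs_mul, abs_of_nonneg (hc_nonneg n)]
    exact mul_le_mul_of_nonneg_right (hc_le n) (abs_nonneg _)
  have hptend : Tendsto (fun n => StrongDual.toWeakDual (α • y₀ + c n • w n)) atTop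
      (nhds (StrongDual.toWeakDual (α • y₀))) := by
    refine tendsto_iff_forall_eval_tendsto_topDualPairing.mpr fun x => ?_
    show Tendsto (fun n => (α • y₀ + c n • w n) x) atTop (nhds ((α • y₀) x))
    simp only [ContinuousLinearMap.add_apply,
      ContinuousLinearMap.smul_apply, smul_eq_mul]
    simpa using tendsto_const_nhds.add (hmul0 x)
  have hqtend : Tendsto (fun n => StrongDual.toWeakDual (α • y₀ - c n • w n)) atTop
      (nhds (StrongDual.toWeakDual (α • y₀))) := by
    refine tendsto_iff_forall_eval_tendsto_topDualPairing.mpr fun x => ?_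
    show Tendsto (fun n => (α • y₀ - c n • w n) x) atTop (nhds ((α • y₀) x))
    simp only [ContinuousLinearMap.sub_apply,
      ContinuousLinearMap.smul_apply, smul_eq_mul]
    simpa using tendsto_const_nhds.sub (hmul0 x)
  have hpV : ∀ᶠ n in atTop, (α • y₀ + c n • w n) ∈ V := by
    filter_upwards [hptend.eventually (hVopen.eventually_mem hαV)] with n hn
    obtain ⟨v, hv, hveq⟩ := hn
    rw [StrongDual.toWeakDual_inj] at hveq
    exact hveq ▸ hv
  have hqV : ∀ᶠ n in atTop, (α • y₀ - c n • w n) ∈ V := by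
    filter_upwards [hqtend.eventually (hVopen.eventually_mem hαV)] with n hn
    obtain ⟨v, hv, hveq⟩ := hn
    rw [StrongDual.toWeakDual_inj] at hveq
    exact hveq ▸ hv
  obtain ⟨n, hn1, hn2, hn3, hn4⟩ := (hev1.and (hev2.and (hpV.and hqV))).exists
  have hkey : (1 - α) * (1 - δ') / ‖w n‖ * ‖w n‖ = (1 - α) * (1 - δ') :=
    div_mul_cancel₀ _ (ne_of_gt (hwn0 n))
  have hαδ : α * δ = (1 - α) * δ' := by
    rw [hδ_def]; field_simp
  have knonneg : (0:ℝ) ≤ (1 - α) * (1 - δ') / ‖w n‖ :=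
    div_nonneg (mul_nonneg (by linarith) (by linarith)) (norm_nonneg _)
  have hpnorm : ‖α • y₀ + c n • w n‖ ≤ 1 := by
    have hid : α • y₀ + c n • w n
        = α • (y₀ + w n) + ((1 - α) * (1 - δ') / ‖w n‖) • w n := by
      simp only [hc_def]; module
    rw [hid]
    have hb := norm_add_le (α • (y₀ + w n)) (((1 - α) * (1 - δ') / ‖w n‖) • w n)
    rw [norm_smul, norm_smul, Real.norm_eq_abs, Real.norm_eq_abs, abs_of_nonneg hα0.le,
      abs_of_nonneg knonneg, hkey] at hb
    nlinarith [mul_le_mul_of_nonneg_left hn1.le hα0.le, hαδ]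
  have hqnorm : ‖α • y₀ - c n • w n‖ ≤ 1 := by
    have hid : α • y₀ - c n • w n
        = α • (y₀ - w n) - ((1 - α) * (1 - δ') / ‖w n‖) • w n := by
      simp only [hc_def]; module
    rw [hid]
    have hb := norm_sub_le (α • (y₀ - w n)) (((1 - α) * (1 - δ') / ‖w n‖) • w n)
    rw [norm_smul, norm_smul, Real.norm_eq_abs, Real.norm_eq_abs, abs_of_nonneg hα0.le,
      abs_of_nonneg knonneg, hkey] at hb
    nlinarith [mul_le_mul_of_nonneg_left hn2.le hα0.le, hαδ]
  have hdist : ε < dist (α • y₀ + c n • w n) (α • y₀ - c n • w n) := by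
    rw [dist_eq_norm]
    have hid : (α • y₀ + c n • w n) - (α • y₀ - c n • w n) = (2 * c n) • w n := by
      module
    rw [hid, norm_smul, Real.norm_eq_abs,
      abs_of_nonneg (by linarith [hc_nonneg n] : (0:ℝ) ≤ 2 * c n)]
    have hcw : c n * ‖w n‖ = α * ‖w n‖ + (1 - α) * (1 - δ') := by
      simp only [hc_def]; rw [add_mul, hkey]
    have hgt := hw_gt n
    have hex : 2 * c n * ‖w n‖ = 2 * (α * ‖w n‖) + 2 * ((1 - α) * (1 - δ')) := by
      rw [mul_assoc, hcw]; ring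
    rw [hex, hδ'_def]
    nlinarith [mul_lt_mul_of_pos_left hgt hα0,
      mul_lt_mul_of_pos_left hε2 (show (0:ℝ) < 1 - α by linarith)]
  have hbounded : Bornology.IsBounded (Metric.closedBall (0 : StrongDual ℝ X) 1 ∩ V) :=
    Metric.isBounded_closedBall.subset Set.inter_subset_left
  exact lt_of_lt_of_le hdist (Metric.dist_le_diam_of_mem hbounded
    ⟨mem_closedBall_zero_iff.mpr hpnorm, hn3⟩ ⟨mem_closedBall_zero_iff.mpr hqnorm, hn4⟩)
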